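/- In the regular pentagon K = conv{k_i : i = 0,…,4} with k_i = Rot_{2πi/5}(1,0), the segment from p₁ = k₀ to p₄ = ½(k₂ + k₃) is an affine diameter of K: no chord of K parallel to it is longer. -/

import Mathlib

open Real

/-- The vertices of the regular pentagon: `k i = Rot_{2πi/5}(1, 0)`. -/
noncomputable def pentVtx (i : ℕ) : EuclideanSpace ℝ (Fin 2) :=
  (WithLp.equiv 2 (Fin 2 → ℝ)).symm ![Real.cos (2 * π * i / 5), Real.sin (2 * π * i / 5)]

/-- The regular pentagon. -/
noncomputable def pentagon : Set (EuclideanSpace ℝ (Fin 2)) :=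
  convexHull ℝ {pentVtx 0, pentVtx 1, pentVtx 2, pentVtx 3, pentVtx 4}

private lemma pentVtx_apply (i : ℕ) (j : Fin 2) :
    pentVtx i j = ![Real.cos (2 * π * i / 5), Real.sin (2 * π * i / 5)] j := by
  rfl

private lemma cos_pi5_nonneg : 0 ≤ Real.cos (π / 5) := by
  apply Real.cos_nonneg_of_mem_Icc
  constructor <;> nlinarith [Real.pi_pos]

private lemma cos_2pi5_nonneg : 0 ≤ Real.cos (2 * π / 5) := by
  apply Real.cos_nonneg_of_mem_Icc
  constructor <;> nlinarith [Real.pi_pos]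

private lemma angle2 : 2 * π * ((2 : ℕ) : ℝ) / 5 = π - π / 5 := by push_cast; ring
private lemma angle3 : 2 * π * ((3 : ℕ) : ℝ) / 5 = π / 5 + π := by push_cast; ring
private lemma angle4 : 2 * π * ((4 : ℕ) : ℝ) / 5 = 2 * π - 2 * π / 5 := by push_cast; ring
private lemma angle1 : 2 * π * ((1 : ℕ) : ℝ) / 5 = 2 * π / 5 := by push_cast; ring
private lemma angle0 : 2 * π * ((0 : ℕ) : ℝ) / 5 = 0 := by push_cast; ring

private lemma mem_pentagon_coord {p : EuclideanSpace ℝ (Fin 2)} (hp : p ∈ pentagon) :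
    -Real.cos (π / 5) ≤ p 0 ∧ p 0 ≤ 1 := by
  have hconv : Convex ℝ
      {q : EuclideanSpace ℝ (Fin 2) | -Real.cos (π / 5) ≤ q 0 ∧ q 0 ≤ 1} := by
    intro x hx y hy s u hs hu hsu
    obtain ⟨hx1, hx2⟩ := hx
    obtain ⟨hy1, hy2⟩ := hy
    constructor <;>
      simp only [Set.mem_setOf_eq, PiLp.add_apply, PiLp.smul_apply, smul_eq_mul] <;>
      nlinarith
  have hsub : pentagon ⊆
      {q : EuclideanSpace ℝ (Fin 2) | -Real.cos (π / 5) ≤ q 0 ∧ q 0 ≤ 1} := by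
    apply convexHull_min _ hconv
    intro q hq
    have hc : 0 ≤ Real.cos (π / 5) := cos_pi5_nonneg
    have hc2 : 0 ≤ Real.cos (2 * π / 5) := cos_2pi5_nonneg
    have hle : Real.cos (2 * π / 5) ≤ 1 := Real.cos_le_one _
    simp only [Set.mem_insert_iff, Set.mem_singleton_iff] at hq
    rcases hq with h | h | h | h | h <;> subst h <;>
      simp only [Set.mem_setOf_eq, pentVtx_apply, Matrix.cons_val_zero]
    · rw [angle0, Real.cos_zero]; constructor <;> linarith
    · rw [angle1]; constructor <;> linarith
    · rw [angle2, Real.cos_pi_sub]; constructor <;> linarith [Real.cos_le_one (π / 5)]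
    · rw [angle3, Real.cos_add_pi]; constructor <;> linarith [Real.cos_le_one (π / 5)]
    · rw [angle4, Real.cos_two_pi_sub]; constructor <;> linarith
  exact hsub hp

private lemma norm_of_snd_zero (x : EuclideanSpace ℝ (Fin 2)) (hx : x 1 = 0) :
    ‖x‖ = |x 0| := by
  rw [EuclideanSpace.norm_eq, Fin.sum_univ_two, hx]
  simp [Real.sqrt_sq_eq_abs]

/-- In the regular pentagon, the segment from `p₁ = k₀` to `p₄ = ½(k₂ + k₃)` is an affine
diameter: no chord (segment with endpoints in `K`) parallel to it is longer. -/
theorem pentagon_affine_diameter :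
    ∀ a ∈ pentagon, ∀ b ∈ pentagon,
      (∃ t : ℝ, b - a = t • ((1 / 2 : ℝ) • (pentVtx 2 + pentVtx 3) - pentVtx 0)) →
      ‖b - a‖ ≤ ‖(1 / 2 : ℝ) • (pentVtx 2 + pentVtx 3) - pentVtx 0‖ := by
  intro a ha b hb hpar
  obtain ⟨t, ht⟩ := hpar
  set v : EuclideanSpace ℝ (Fin 2) :=
    (1 / 2 : ℝ) • (pentVtx 2 + pentVtx 3) - pentVtx 0 with hv
  have hv0 : v 0 = -(Real.cos (π / 5) + 1) := by
    simp only [hv, PiLp.sub_apply, PiLp.smul_apply, PiLp.add_apply, smul_eq_mul,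
      pentVtx_apply, Matrix.cons_val_zero]
    rw [angle0, angle2, angle3, Real.cos_pi_sub, Real.cos_add_pi, Real.cos_zero]
    ring
  have hv1 : v 1 = 0 := by
    simp only [hv, PiLp.sub_apply, PiLp.smul_apply, PiLp.add_apply, smul_eq_mul,
      pentVtx_apply, Matrix.cons_val_one, Matrix.head_cons, Matrix.cons_val_zero]
    rw [angle0, angle2, angle3, Real.sin_pi_sub, Real.sin_add_pi, Real.sin_zero]
    ring
  have hba1 : (b - a) 1 = 0 := by
    rw [ht]
    simp [hv1]
  have hnormv : ‖v‖ = Real.cos (π / 5) + 1 := by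
    rw [norm_of_snd_zero v hv1, hv0, abs_neg, abs_of_nonneg]
    linarith [cos_pi5_nonneg]
  have hnormba : ‖b - a‖ = |b 0 - a 0| := by
    rw [norm_of_snd_zero _ hba1, PiLp.sub_apply]
  obtain ⟨ha1, ha2⟩ := mem_pentagon_coord ha
  obtain ⟨hb1, hb2⟩ := mem_pentagon_coord hb
  rw [hnormba, hnormv, abs_le]
  constructor <;> linarith
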